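/- Let $X$ be a Banach lattice with a quasi-interior point, and let $P\colon X\to X$ be a positive projection satisfying $\alpha\,\mathrm{id}_X\le P$ for some $\alpha>0$. If $B\subseteq X$ is a projection band invariant under $P$, then its disjoint complement $B^{d}$ is also invariant under $P$. -/

import Mathlib

section aux
variable {X : Type*} [NormedAddCommGroup X] [Lattice X] [IsOrderedAddMonoid X] [HasSolidNorm X] [NormedSpace ℝ X]

omit [NormedSpace ℝ X] in
lemma my_inf_add_le (s t w : X) (hs : 0 ≤ s) (hw : 0 ≤ w) (ht : 0 ≤ t) :
    (s + t) ⊓ w ≤ s ⊓ w + t ⊓ w := by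
  have h1 : s ⊓ w + t = (s + t) ⊓ (w + t) := inf_add _ _ _
  have h2 : s ⊓ w + w = (s + w) ⊓ (w + w) := inf_add _ _ _
  have h3 : s ⊓ w + t ⊓ w = ((s ⊓ w) + t) ⊓ ((s ⊓ w) + w) := add_inf _ _ _
  rw [h3, h1, h2]
  refine le_inf (le_inf inf_le_left ?_) (le_inf ?_ ?_)
  · exact le_trans inf_le_right (le_add_of_nonneg_right ht)
  · exact le_trans inf_le_right (le_add_of_nonneg_left hs)
  · exact le_trans inf_le_right (le_add_of_nonneg_left hw)

omit [NormedSpace ℝ X] in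
lemma my_nsmul_inf (s w : X) (hs : 0 ≤ s) (hw : 0 ≤ w) (h : s ⊓ w = 0) :
    ∀ n : ℕ, (n • s) ⊓ w = 0 := by
  intro n
  induction n with
  | zero => rw [zero_nsmul]; exact inf_eq_left.mpr hw
  | succ n ih =>
    have hle : ((n+1) • s) ⊓ w ≤ (n • s) ⊓ w + s ⊓ w := by
      rw [succ_nsmul]
      exact my_inf_add_le _ _ _ (nsmul_nonneg hs n) hw hs
    rw [ih, h, add_zero] at hle
    exact le_antisymm hle (le_inf (nsmul_nonneg hs (n+1)) hw)

omit [NormedSpace ℝ X] in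
lemma my_nsmul_nonneg_rev (n : ℕ) (hn : 0 < n) (y : X) (h : 0 ≤ n • y) : 0 ≤ y := by
  have hd : y⁺ ⊓ y⁻ = 0 := posPart_inf_negPart_eq_zero y
  have hsub : n • y = n • y⁺ - n • y⁻ := by rw [← smul_sub, posPart_sub_negPart]
  have h1 : n • y⁻ ≤ n • y⁺ := by
    have h' := h; rw [hsub, sub_nonneg] at h'; exact h'
  have h2 : y⁻ ≤ n • y⁻ := by
    calc y⁻ = 1 • y⁻ := (one_nsmul _).symm
    _ ≤ n • y⁻ := nsmul_le_nsmul_left (negPart_nonneg y) hn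
  have h3 : y⁻ ≤ n • y⁺ := h2.trans h1
  have h4 : (n • y⁺) ⊓ y⁻ = 0 := my_nsmul_inf _ _ (posPart_nonneg y) (negPart_nonneg y) hd n
  have h5 : y⁻ = (n • y⁺) ⊓ y⁻ := (inf_eq_right.mpr h3).symm
  rw [h4] at h5
  exact negPart_eq_zero.mp h5

lemma my_smul_nonneg (r : ℝ) (x : X) (hr : 0 ≤ r) (hx : 0 ≤ x) : 0 ≤ r • x := by
  have hA : ∀ n : ℕ, 0 < n → 0 ≤ (n : ℝ)⁻¹ • x := by
    intro n hn
    refine my_nsmul_nonneg_rev n hn _ ?_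
    have : (n : ℕ) • ((n:ℝ)⁻¹ • x) = x := by
      rw [← Nat.cast_smul_eq_nsmul ℝ, smul_smul,
        mul_inv_cancel₀ (by exact_mod_cast hn.ne'), one_smul]
    rw [this]; exact hx
  have hB : ∀ q : ℚ, 0 ≤ q → 0 ≤ (q : ℝ) • x := by
    intro q hq
    have hnum : 0 ≤ q.num := Rat.num_nonneg.mpr hq
    have hden : 0 ≤ ((q.den : ℝ))⁻¹ • x := hA q.den q.pos
    have heq : (q : ℝ) • x = q.num.toNat • (((q.den : ℝ))⁻¹ • x) := by
      rw [← Nat.cast_smul_eq_nsmul ℝ, smul_smul]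
      congr 1
      have : ((q.num.toNat : ℝ)) = (q.num : ℝ) := by exact_mod_cast Int.toNat_of_nonneg hnum
      rw [this, Rat.cast_def, div_eq_mul_inv]
    rw [heq]
    exact nsmul_nonneg hden _
  have hC : IsClosed {t : ℝ | 0 ≤ t • x} := by
    have hcont : Continuous fun t : ℝ => t • x := by continuity
    exact isClosed_le continuous_const hcont
  have hex : ∀ n : ℕ, ∃ q : ℚ, r < (q:ℝ) ∧ (q:ℝ) < r + 1/(n+1) := by
    intro n
    refine exists_rat_btwn ?_
    have : (0:ℝ) < 1/(n+1) := by positivity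
    linarith
  choose q hq1 hq2 using hex
  have htend : Filter.Tendsto (fun n : ℕ => ((q n : ℝ))) Filter.atTop (nhds r) := by
    have h1 : Filter.Tendsto (fun n : ℕ => r + 1/((n:ℝ)+1)) Filter.atTop (nhds r) := by
      have := tendsto_one_div_add_atTop_nhds_zero_nat (𝕜 := ℝ)
      simpa using Filter.Tendsto.const_add r this
    exact tendsto_of_tendsto_of_tendsto_of_le_of_le tendsto_const_nhds h1
      (fun n => (hq1 n).le) (fun n => (hq2 n).le)
  have hmem : ∀ n, ((q n : ℝ)) ∈ {t : ℝ | 0 ≤ t • x} := by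
    intro n
    exact hB (q n) (by exact_mod_cast (hr.trans_lt (hq1 n)).le)
  exact hC.mem_of_tendsto htend (Filter.Eventually.of_forall hmem)

lemma my_abs_smul_le_aux (r : ℝ) (x : X) (hr : 0 ≤ r) : |r • x| ≤ r • |x| := by
  refine abs_le'.mpr ⟨?_, ?_⟩
  · have h := my_smul_nonneg r (|x| - x) hr (sub_nonneg.mpr (le_abs_self x))
    rw [smul_sub] at h
    exact sub_nonneg.mp h
  · have h0 : (0:X) ≤ |x| + x := by
      have h' := add_le_add_right (neg_le_abs x) x
      simpa [add_comm] using h'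
    have h := my_smul_nonneg r (|x| + x) hr h0
    rw [smul_add] at h
    rw [← sub_nonneg, sub_neg_eq_add]
    exact h
  
lemma my_abs_smul_le (r : ℝ) (x : X) : |r • x| ≤ |r| • |x| := by
  rcases le_or_gt 0 r with hr | hr
  · rw [abs_of_nonneg hr]; exact my_abs_smul_le_aux r x hr
  · have h1 : r • x = (-r) • (-x) := by rw [neg_smul, smul_neg, neg_neg]
    rw [h1, abs_of_neg hr]
    calc |(-r) • (-x)| ≤ (-r) • |(-x)| := my_abs_smul_le_aux (-r) (-x) (by linarith)
      _ = (-r) • |x| := by rw [abs_neg]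

end aux

theorem stmt1 {X : Type*} [NormedAddCommGroup X] [Lattice X] [IsOrderedAddMonoid X] [HasSolidNorm X] [NormedSpace ℝ X]
    [CompleteSpace X]
    (e : X) (he : 0 ≤ e)
    (hqi : Dense {x : X | ∃ c : ℝ, 0 ≤ c ∧ |x| ≤ c • e})
    (P : X →L[ℝ] X) (hproj : ∀ x, P (P x) = P x) (hpos : ∀ x : X, 0 ≤ x → 0 ≤ P x)
    (α : ℝ) (hα : 0 < α) (hdom : ∀ x : X, 0 ≤ x → α • x ≤ P x)
    (B : Submodule ℝ X) (hsolid : ∀ x y : X, |x| ≤ |y| → y ∈ B → x ∈ B)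
    (hband : ∀ x : X, ∃ b ∈ B, ∃ c : X, (∀ y ∈ B, |c| ⊓ |y| = 0) ∧ x = b + c)
    (hinv : ∀ x ∈ B, P x ∈ B) :
    ∀ x : X, (∀ y ∈ B, |x| ⊓ |y| = 0) → ∀ y ∈ B, |P x| ⊓ |y| = 0 := by
  set D : X → Prop := fun x => ∀ y ∈ B, |x| ⊓ |y| = 0 with hDdef
  have hinf0 : ∀ a y : X, (0:X) ≤ |a| ⊓ |y| := fun a y => le_inf (abs_nonneg a) (abs_nonneg y)
  have hDadd : ∀ a b, D a → D b → D (a + b) := by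
    intro a b ha hb y hy
    refine le_antisymm ?_ (hinf0 _ _)
    calc |a + b| ⊓ |y| ≤ (|a| + |b|) ⊓ |y| := inf_le_inf_right _ (abs_add_le a b)
      _ ≤ |a| ⊓ |y| + |b| ⊓ |y| :=
        my_inf_add_le _ _ _ (abs_nonneg a) (abs_nonneg y) (abs_nonneg b)
      _ = 0 := by rw [ha y hy, hb y hy, add_zero]
  have hDsmul : ∀ (r : ℝ) a, D a → D (r • a) := by
    intro r a ha y hy
    obtain ⟨n, hn⟩ := exists_nat_ge |r|
    refine le_antisymm ?_ (hinf0 _ _)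
    have h1 : |r • a| ≤ n • |a| := by
      refine (my_abs_smul_le r a).trans ?_
      have h2 : (0:X) ≤ ((n:ℝ) - |r|) • |a| :=
        my_smul_nonneg _ _ (by linarith) (abs_nonneg a)
      rw [sub_smul, sub_nonneg, Nat.cast_smul_eq_nsmul] at h2
      exact h2
    calc |r • a| ⊓ |y| ≤ (n • |a|) ⊓ |y| := inf_le_inf_right _ h1
      _ = 0 := my_nsmul_inf _ _ (abs_nonneg a) (abs_nonneg y) (ha y hy) n
  have hDsub : ∀ a b, D a → D b → D (a - b) := by
    intro a b ha hb
    have h : a - b = a + (-1 : ℝ) • b := by rw [neg_one_smul]; abel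
    rw [h]
    exact hDadd _ _ ha (hDsmul _ _ hb)
  have hcomp : ∀ z b c : X, 0 ≤ z → b ∈ B → D c → z = b + c → 0 ≤ b ∧ 0 ≤ c := by
    intro z b c hz hbB hcD hzbc
    rw [hzbc] at hz
    have hdisj : |c| ⊓ |b| = 0 := hcD b hbB
    have habsp : ∀ u : X, u⁺ ≤ |u| := fun u => by
      rw [posPart_def]; exact sup_le (le_abs_self u) (abs_nonneg u)
    have habsn : ∀ u : X, u⁻ ≤ |u| := fun u => by
      rw [negPart_def]; exact sup_le (neg_le_abs u) (abs_nonneg u)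
    constructor
    · have h1 : -b ≤ c := by rwa [← sub_nonneg, sub_neg_eq_add, add_comm]
      have h2 : b⁻ ≤ c⁺ := by
        rw [negPart_def, posPart_def]; exact sup_le_sup_right h1 0
      have h3 : b⁻ ≤ |c| ⊓ |b| := le_inf (h2.trans (habsp c)) (habsn b)
      rw [hdisj] at h3
      exact negPart_eq_zero.mp (le_antisymm h3 (negPart_nonneg b))
    · have h1 : -c ≤ b := by rwa [← sub_nonneg, sub_neg_eq_add]
      have h2 : c⁻ ≤ b⁺ := by
        rw [negPart_def, posPart_def]; exact sup_le_sup_right h1 0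
      have h3 : c⁻ ≤ |c| ⊓ |b| := le_inf (habsn c) (h2.trans (habsp b))
      rw [hdisj] at h3
      exact negPart_eq_zero.mp (le_antisymm h3 (negPart_nonneg c))
  have key : ∀ x : X, 0 ≤ x → D x → D (P x) := by
    intro x hx hxD
    obtain ⟨u, huB, c, hcD, hPx⟩ := hband (P x)
    have hPx0 : 0 ≤ P x := hpos x hx
    obtain ⟨hu0, hc0⟩ := hcomp _ u c hPx0 huB hcD hPx
    have hz1 : (0:X) ≤ P x - α • x := sub_nonneg.mpr (hdom x hx)
    have hd1 : P x - α • x = u + (c - α • x) := by rw [hPx]; abel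
    obtain ⟨-, hca⟩ := hcomp _ u _ hz1 huB (hDsub _ _ hcD (hDsmul _ _ hxD)) hd1
    have hz2 : (0:X) ≤ P x - P u := by
      have h1 : (0:X) ≤ P x - u := by rw [hPx]; simpa using hc0
      have h2 := hpos _ h1
      rw [map_sub, hproj] at h2
      exact h2
    have hd2 : P x - P u = (u - P u) + c := by rw [hPx]; abel
    obtain ⟨huPu, -⟩ := hcomp _ (u - P u) c hz2 (sub_mem huB (hinv u huB)) hcD hd2
    have hPuu : P u = u := by
      have h1 : α • (u - P u) ≤ P (u - P u) := hdom _ huPu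
      have h2 : P (u - P u) = 0 := by rw [map_sub, hproj]; abel
      rw [h2] at h1
      have h3 : (0:X) ≤ α⁻¹ • (-(α • (u - P u))) :=
        my_smul_nonneg _ _ (by positivity) (neg_nonneg.mpr h1)
      rw [smul_neg, smul_smul, inv_mul_cancel₀ hα.ne', one_smul] at h3
      exact le_antisymm (sub_nonneg.mp huPu) (sub_nonpos.mp (neg_nonneg.mp h3))
    have hz3 : (0:X) ≤ (1 - α) • P x - u := by
      have harg : (0:X) ≤ P x - u - α • x := by
        have heq : P x - u - α • x = c - α • x := by rw [hPx]; abel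
        rw [heq]; exact hca
      have h2 := hpos _ harg
      rw [map_sub, map_sub, hproj, map_smul, hPuu] at h2
      have heq : (1 - α) • P x - u = P x - u - α • P x := by
        rw [sub_smul, one_smul]; abel
      rw [heq]
      exact h2
    have hd3 : (1 - α) • P x - u = (-α) • u + (1 - α) • c := by
      rw [hPx, smul_add]
      have heq : (1 - α) • u - u = (-α) • u := by
        rw [sub_smul, one_smul, neg_smul]; abel
      rw [← heq]; abel
    obtain ⟨hau, -⟩ := hcomp _ ((-α) • u) ((1 - α) • c) hz3
      (Submodule.smul_mem _ _ huB) (hDsmul _ _ hcD) hd3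
    have hu0' : u = 0 := by
      have h3 : (0:X) ≤ α⁻¹ • ((-α) • u) := my_smul_nonneg _ _ (by positivity) hau
      rw [smul_smul, mul_neg, inv_mul_cancel₀ hα.ne', neg_one_smul] at h3
      exact le_antisymm (neg_nonneg.mp h3) hu0
    have hfin : P x = c := by rw [hPx, hu0', zero_add]
    rw [hDdef]
    simpa [hfin] using hcD
  intro x hxD
  have hxp : D (x⁺) := by
    intro y hy
    refine le_antisymm ?_ (hinf0 _ _)
    have h1 : |x⁺| ≤ |x| := abs_le'.mpr ⟨by
        rw [posPart_def]; exact sup_le (le_abs_self x) (abs_nonneg x),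
      (neg_nonpos.mpr (posPart_nonneg x)).trans (abs_nonneg x)⟩
    calc |x⁺| ⊓ |y| ≤ |x| ⊓ |y| := inf_le_inf_right _ h1
      _ = 0 := hxD y hy
  have hxn : D (x⁻) := by
    intro y hy
    refine le_antisymm ?_ (hinf0 _ _)
    have h1 : |x⁻| ≤ |x| := abs_le'.mpr ⟨by
        rw [negPart_def]; exact sup_le (neg_le_abs x) (abs_nonneg x),
      (neg_nonpos.mpr (negPart_nonneg x)).trans (abs_nonneg x)⟩
    calc |x⁻| ⊓ |y| ≤ |x| ⊓ |y| := inf_le_inf_right _ h1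
      _ = 0 := hxD y hy
  have hsplit : P x = P (x⁺) - P (x⁻) := by
    rw [← map_sub, posPart_sub_negPart]
  have hfin : D (P x) := by
    rw [hsplit]
    exact hDsub _ _ (key _ (posPart_nonneg x) hxp) (key _ (negPart_nonneg x) hxn)
  exact hfin
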